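/- The operations T_Min_p, S_Min_p and the standard negator N_s form a De Morgan triplet: T_Min_p(x,y) = N_s(S_Min_p(N_s(x), N_s(y))) and S_Min_p(x,y) = N_s(T_Min_p(N_s(x), N_s(y))) for all x, y in L^I. -/
import Mathlib


def LI : Type := {p : ℝ × ℝ // 0 ≤ p.1 ∧ p.1 ≤ p.2 ∧ p.2 ≤ 1}

noncomputable def mid (x : LI) : ℝ := (x.val.1 + x.val.2) / 2

noncomputable def width (x : LI) : ℝ := x.val.2 - x.val.1

/-- `T_Min_p`: smaller midpoint wins; on equal midpoints the narrower interval wins. -/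
noncomputable def TMinp (x y : LI) : LI :=
  if mid x = mid y then (if width x ≤ width y then x else y)
  else (if mid x ≤ mid y then x else y)

/-- `S_Min_p`: larger midpoint wins; on equal midpoints the narrower interval wins. -/
noncomputable def SMinp (x y : LI) : LI :=
  if mid x = mid y then (if width x ≤ width y then x else y)
  else (if mid x ≤ mid y then y else x)

/-- The standard negator `N_s`. -/
noncomputable def Ns (x : LI) : LI :=
  ⟨(1 - x.val.2, 1 - x.val.1), by
    obtain ⟨h1, h2, h3⟩ := x.property
    refine ⟨by simp; linarith, by simp; linarith, by simp; linarith⟩⟩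

lemma Ns_Ns (x : LI) : Ns (Ns x) = x := by
  apply Subtype.ext
  simp [Ns]

lemma mid_Ns (x : LI) : mid (Ns x) = 1 - mid x := by
  simp [mid, Ns]; ring

lemma width_Ns (x : LI) : width (Ns x) = width x := by
  simp [width, Ns]

theorem stmt_17 (x y : LI) :
    TMinp x y = Ns (SMinp (Ns x) (Ns y)) ∧ SMinp x y = Ns (TMinp (Ns x) (Ns y)) := by
  constructor <;>
  · unfold TMinp SMinp
    rw [mid_Ns, mid_Ns, width_Ns, width_Ns]
    split_ifs <;> (try rw [Ns_Ns]) <;>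
      (exfalso; rename_i h3 h2 h1 h0; first | linarith | exact h1 (by linarith) | exact h3 (by linarith) | exact h0 (by linarith) | exact h2 (by linarith))
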